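/- Let h¹, h², B > 0 and let P, N be disjoint finite sets with valuations θ_i > 0 for i ∈ P and |θ_j| > 0 for j ∈ N, with Σ_{i∈P} θ_i > h¹ and Σ_{j∈N} |θ_j| > h². Suppose every agent's contribution satisfies x_i < ((h¹+h²)/(B+h¹+h²))·|θ_i| and X¹ = Σ_{i∈P} x_i, X² = Σ_{j∈N} x_j. If X¹ = h¹, then B < (h¹+h²)(ϑ¹−h¹)/h¹, and if X² = h², then B < (h¹+h²)(ϑ²−h²)/h². -/
import Mathlib

lemma pprn_aux (h1 h2 B S : ℝ) (hh1 : 0 < h1) (hh2 : 0 < h2) (hB : 0 < B)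
    (h : h1 < (h1 + h2) / (B + h1 + h2) * S) :
    B < (h1 + h2) * (S - h1) / h1 := by
  have hd : 0 < B + h1 + h2 := by linarith
  rw [div_mul_eq_mul_div, lt_div_iff₀ hd] at h
  rw [lt_div_iff₀ hh1]
  nlinarith

theorem pprn_equilibrium_existence {ι : Type*} [DecidableEq ι]
    (P N : Finset ι) (hdisj : Disjoint P N)
    (h1 h2 B : ℝ) (hh1 : 0 < h1) (hh2 : 0 < h2) (hB : 0 < B)
    (θ x : ι → ℝ)
    (hθP : ∀ i ∈ P, 0 < θ i) (hθN : ∀ j ∈ N, 0 < |θ j|)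
    (hv1 : h1 < ∑ i ∈ P, θ i) (hv2 : h2 < ∑ j ∈ N, |θ j|)
    (hx : ∀ i ∈ P ∪ N, 0 ≤ x i)
    (hbound : ∀ i ∈ P ∪ N, x i < ((h1 + h2) / (B + h1 + h2)) * |θ i|) :
    ((∑ i ∈ P, x i = h1) →
      B < (h1 + h2) * ((∑ i ∈ P, θ i) - h1) / h1) ∧
    ((∑ j ∈ N, x j = h2) →
      B < (h1 + h2) * ((∑ j ∈ N, |θ j|) - h2) / h2) := by
  constructor
  · intro hX
    have hPne : P.Nonempty := by
      by_contra h
      rw [Finset.not_nonempty_iff_eq_empty] at h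
      simp [h] at hv1; linarith
    have hlt : ∑ i ∈ P, x i < (h1 + h2) / (B + h1 + h2) * ∑ i ∈ P, θ i := by
      rw [Finset.mul_sum]
      refine Finset.sum_lt_sum_of_nonempty hPne (fun i hi => ?_)
      have := hbound i (Finset.mem_union_left _ hi)
      rwa [abs_of_pos (hθP i hi)] at this
    rw [hX] at hlt
    exact pprn_aux h1 h2 B _ hh1 hh2 hB hlt
  · intro hX
    have hNne : N.Nonempty := by
      by_contra h
      rw [Finset.not_nonempty_iff_eq_empty] at h
      simp [h] at hv2; linarith
    have hlt : ∑ j ∈ N, x j < (h1 + h2) / (B + h1 + h2) * ∑ j ∈ N, |θ j| := by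
      rw [Finset.mul_sum]
      exact Finset.sum_lt_sum_of_nonempty hNne
        (fun j hj => hbound j (Finset.mem_union_right _ hj))
    rw [hX] at hlt
    have := pprn_aux h2 h1 B _ hh2 hh1 hB (by rw [add_comm h2 h1]; convert hlt using 3; ring)
    rw [add_comm h2 h1] at this; exact this
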